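/- Let F be a finite field with q elements and T = Tr(F). The vertex set of Γ(T) is the disjoint union of the q+1 sets A₁* = {[[u+z,0],[0,z]] : u ∈ F×, z ∈ F}, A₂* = {[[z,u],[0,z]] : u ∈ F×, z ∈ F}, and for each x ∈ F×, A₃ₓ* = {[[v+z, xv],[0,z]] : v ∈ F×, z ∈ F}; each of these sets has cardinality q^2 − q, and each induces a clique in Γ(T) (any two distinct matrices within the same set commute). -/

import Mathlib

open Matrix

/-- The ring of 2×2 upper triangular matrices over `R`. -/
def Tri (R : Type*) [CommRing R] : Subring (Matrix (Fin 2) (Fin 2) R) where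
  carrier := {A | A 1 0 = 0}
  mul_mem' := by
    intro a b ha hb
    simp only [Set.mem_setOf_eq] at *
    simp [Matrix.mul_apply, Fin.sum_univ_two, ha, hb]
  one_mem' := by simp [Matrix.one_apply]
  add_mem' := by
    intro a b ha hb
    simp_all [Matrix.add_apply]
  zero_mem' := by simp
  neg_mem' := by
    intro a ha
    simp_all

/-- The commuting graph of a ring `T`: vertices are the noncentral elements,
two distinct vertices are adjacent iff they commute. -/
def commGraph (T : Type*) [Ring T] : SimpleGraph {x : T // x ∉ Set.center T} where
  Adj a b := a ≠ b ∧ (a : T) * b = b * a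
  symm := by
    constructor
    rintro a b ⟨h1, h2⟩
    exact ⟨h1.symm, h2.symm⟩
  loopless := by constructor; rintro a ⟨h, _⟩; exact h rfl

variable {F : Type*} [Field F] [Fintype F]

/-- The set `A₁* = {[[u+z,0],[0,z]] : u ∈ F×, z ∈ F}`. -/
def A1star (F : Type*) [Field F] : Set (Tri F) :=
  {A | ∃ (u : Fˣ) (z : F), (A : Matrix (Fin 2) (Fin 2) F) = !![(u : F) + z, 0; 0, z]}

/-- The set `A₂* = {[[z,u],[0,z]] : u ∈ F×, z ∈ F}`. -/
def A2star (F : Type*) [Field F] : Set (Tri F) :=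
  {A | ∃ (u : Fˣ) (z : F), (A : Matrix (Fin 2) (Fin 2) F) = !![z, (u : F); 0, z]}

/-- The set `A₃ₓ* = {[[v+z, xv],[0,z]] : v ∈ F×, z ∈ F}` for `x ∈ F×`. -/
def A3star (F : Type*) [Field F] (x : Fˣ) : Set (Tri F) :=
  {A | ∃ (v : Fˣ) (z : F),
    (A : Matrix (Fin 2) (Fin 2) F) = !![(v : F) + z, (x : F) * v; 0, z]}

section Aux

lemma mem_tri_iff {R : Type*} [CommRing R] (A : Matrix (Fin 2) (Fin 2) R) :
    A ∈ Tri R ↔ A 1 0 = 0 := Iff.rfl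

omit [Fintype F] in
lemma tri_eta (A : Tri F) : (A : Matrix (Fin 2) (Fin 2) F) =
    !![(A : Matrix (Fin 2) (Fin 2) F) 0 0, (A : Matrix (Fin 2) (Fin 2) F) 0 1; 0,
      (A : Matrix (Fin 2) (Fin 2) F) 1 1] := by
  have h : (A : Matrix (Fin 2) (Fin 2) F) 1 0 = 0 := A.2
  conv_lhs => rw [Matrix.eta_fin_two (A : Matrix (Fin 2) (Fin 2) F)]
  rw [h]

omit [Fintype F] in
lemma tri_comm {a b d a' b' d' : F} (h : b' * (a - d) = b * (a' - d')) :
    (!![a,b;0,d] : Matrix (Fin 2) (Fin 2) F) * !![a',b';0,d'] =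
    !![a',b';0,d'] * !![a,b;0,d] := by
  ext i j
  fin_cases i <;> fin_cases j <;>
    simp [Matrix.mul_apply, Fin.sum_univ_two] <;> (first | ring1 | linear_combination h)

omit [Fintype F] in
lemma center_iff (A : Tri F) : A ∈ Set.center (Tri F) ↔
    (A : Matrix (Fin 2) (Fin 2) F) 0 1 = 0 ∧
    (A : Matrix (Fin 2) (Fin 2) F) 0 0 = (A : Matrix (Fin 2) (Fin 2) F) 1 1 := by
  rw [Semigroup.mem_center_iff]
  constructor
  · intro h
    have h1 := h ⟨!![0,1;0,0], by rw [mem_tri_iff]; simp⟩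
    have h2 := h ⟨!![1,0;0,0], by rw [mem_tri_iff]; simp⟩
    rw [Subtype.ext_iff] at h1 h2
    have e1 := congrFun (congrFun h1 0 : _) 1
    have e2 := congrFun (congrFun h2 0 : _) 1
    have hA := A.2
    simp [Matrix.mul_apply, Fin.sum_univ_two, hA] at e1 e2
    exact ⟨e2, e1.symm⟩
  · rintro ⟨h1, h2⟩ B
    ext1
    push_cast
    rw [tri_eta A, tri_eta B, h1, h2]
    exact (tri_comm (by ring)).symm

omit [Fintype F] in
lemma mem_A1star {A : Tri F} : A ∈ A1star F ↔
    ∃ (u : Fˣ) (z : F), (A : Matrix (Fin 2) (Fin 2) F) = !![(u : F) + z, 0; 0, z] := Iff.rfl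

omit [Fintype F] in
lemma mem_A2star {A : Tri F} : A ∈ A2star F ↔
    ∃ (u : Fˣ) (z : F), (A : Matrix (Fin 2) (Fin 2) F) = !![z, (u : F); 0, z] := Iff.rfl

omit [Fintype F] in
lemma mem_A3star {A : Tri F} {x : Fˣ} : A ∈ A3star F x ↔
    ∃ (v : Fˣ) (z : F),
      (A : Matrix (Fin 2) (Fin 2) F) = !![(v : F) + z, (x : F) * v; 0, z] := Iff.rfl

lemma card_helper (S : Set (Tri F)) (m : Fˣ → F → Tri F)
    (hmem : ∀ u z, m u z ∈ S)
    (hsurj : ∀ A ∈ S, ∃ u z, m u z = A)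
    (hinj : ∀ u z u' z', m u z = m u' z' → u = u' ∧ z = z')
    (q : ℕ) (hq : Fintype.card F = q) : Nat.card S = q ^ 2 - q := by
  classical
  have hbij : Function.Bijective (fun p : Fˣ × F => (⟨m p.1 p.2, hmem p.1 p.2⟩ : S)) := by
    constructor
    · rintro ⟨u, z⟩ ⟨u', z'⟩ h
      rw [Subtype.ext_iff] at h
      obtain ⟨h1, h2⟩ := hinj u z u' z' h
      simp [h1, h2]
    · rintro ⟨A, hA⟩
      obtain ⟨u, z, h⟩ := hsurj A hA
      exact ⟨(u, z), Subtype.ext h⟩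
  rw [← Nat.card_congr (Equiv.ofBijective _ hbij)]
  rw [Nat.card_prod, Nat.card_eq_fintype_card, Nat.card_eq_fintype_card,
    Fintype.card_units, hq, pow_two, Nat.sub_mul, one_mul]

end Aux

/-- Theorem 2.9(i): the vertex set of the commuting graph of `Tri F` is the
disjoint union of the `q + 1` sets `A₁*`, `A₂*`, `A₃ₓ*` (`x ∈ F×`), each of
cardinality `q^2 - q`, and each of these sets is a clique: any two of its
elements commute. -/
theorem commGraph_tri_field_components (q : ℕ) (hq : Fintype.card F = q) :
    ({A : Tri F | A ∉ Set.center (Tri F)} =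
        A1star F ∪ A2star F ∪ ⋃ x : Fˣ, A3star F x) ∧
    (Disjoint (A1star F) (A2star F) ∧
      (∀ x : Fˣ, Disjoint (A1star F) (A3star F x)) ∧
      (∀ x : Fˣ, Disjoint (A2star F) (A3star F x)) ∧
      (∀ x y : Fˣ, x ≠ y → Disjoint (A3star F x) (A3star F y))) ∧
    (Nat.card (A1star F) = q ^ 2 - q ∧ Nat.card (A2star F) = q ^ 2 - q ∧
      ∀ x : Fˣ, Nat.card (A3star F x) = q ^ 2 - q) ∧
    ((∀ B ∈ A1star F, ∀ C ∈ A1star F, B * C = C * B) ∧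
      (∀ B ∈ A2star F, ∀ C ∈ A2star F, B * C = C * B) ∧
      (∀ x : Fˣ, ∀ B ∈ A3star F x, ∀ C ∈ A3star F x, B * C = C * B)) := by
  refine ⟨?_, ⟨?_, ?_, ?_, ?_⟩, ⟨?_, ?_, ?_⟩, ?_, ?_, ?_⟩
  · -- union
    ext A
    simp only [Set.mem_setOf_eq, Set.mem_union, Set.mem_iUnion, mem_A1star, mem_A2star,
      mem_A3star]
    rw [center_iff]
    have hA : (A : Matrix (Fin 2) (Fin 2) F) 1 0 = 0 := A.2
    constructor
    · intro h
      by_cases h01 : (A : Matrix (Fin 2) (Fin 2) F) 0 1 = 0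
      · have hne : (A : Matrix (Fin 2) (Fin 2) F) 0 0 ≠ (A : Matrix (Fin 2) (Fin 2) F) 1 1 :=
          fun he => h ⟨h01, he⟩
        refine Or.inl (Or.inl ⟨Units.mk0 _ (sub_ne_zero.mpr hne),
          (A : Matrix (Fin 2) (Fin 2) F) 1 1, ?_⟩)
        ext i j
        fin_cases i <;> fin_cases j <;> simp [h01, hA, Units.val_mk0] <;> ring
      · by_cases heq : (A : Matrix (Fin 2) (Fin 2) F) 0 0 = (A : Matrix (Fin 2) (Fin 2) F) 1 1
        · refine Or.inl (Or.inr ⟨Units.mk0 _ h01, (A : Matrix (Fin 2) (Fin 2) F) 0 0, ?_⟩)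
          ext i j
          fin_cases i <;> fin_cases j <;> simp [heq, hA, Units.val_mk0]
        · have hsub : (A : Matrix (Fin 2) (Fin 2) F) 0 0 -
              (A : Matrix (Fin 2) (Fin 2) F) 1 1 ≠ 0 := sub_ne_zero.mpr heq
          refine Or.inr ⟨Units.mk0 (_ / _) (div_ne_zero h01 hsub),
            Units.mk0 _ hsub, (A : Matrix (Fin 2) (Fin 2) F) 1 1, ?_⟩
          ext i j
          fin_cases i <;> fin_cases j <;>
            simp [Units.val_mk0, hA, div_mul_cancel₀ _ hsub] <;> ring
    · intro hm
      rcases hm with ((⟨u, z, h⟩ | ⟨u, z, h⟩) | ⟨x, v, z, h⟩) <;> rintro ⟨hc1, hc2⟩ <;>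
          rw [h] at hc1 hc2 <;> simp at hc1 hc2
      all_goals try first
        | exact u.ne_zero (by linear_combination hc2)
        | exact u.ne_zero hc1
        | exact mul_ne_zero x.ne_zero v.ne_zero hc1
  · -- A1 ∩ A2 = ∅
    rw [Set.disjoint_left]
    intro A hA hA'
    rw [mem_A1star] at hA
    rw [mem_A2star] at hA'
    obtain ⟨u, z, h⟩ := hA
    obtain ⟨u', z', h'⟩ := hA'
    have e := congrFun (congrFun (h.symm.trans h') 0 : _) 1
    simp at e
    exact u'.ne_zero e.symm
  · -- A1 ∩ A3 = ∅
    intro x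
    rw [Set.disjoint_left]
    intro A hA hA'
    rw [mem_A1star] at hA
    rw [mem_A3star] at hA'
    obtain ⟨u, z, h⟩ := hA
    obtain ⟨v, z', h'⟩ := hA'
    have e := congrFun (congrFun (h.symm.trans h') 0 : _) 1
    simp at e
  · -- A2 ∩ A3 = ∅
    intro x
    rw [Set.disjoint_left]
    intro A hA hA'
    rw [mem_A2star] at hA
    rw [mem_A3star] at hA'
    obtain ⟨u, z, h⟩ := hA
    obtain ⟨v, z', h'⟩ := hA'
    have e00 := congrFun (congrFun (h.symm.trans h') 0 : _) 0
    have e11 := congrFun (congrFun (h.symm.trans h') 1 : _) 1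
    simp at e00 e11
    exact v.ne_zero (by linear_combination e11 - e00)
  · -- A3 x ∩ A3 y = ∅
    intro x y hxy
    rw [Set.disjoint_left]
    intro A hA hA'
    rw [mem_A3star] at hA hA'
    obtain ⟨v, z, h⟩ := hA
    obtain ⟨v', z', h'⟩ := hA'
    have e00 := congrFun (congrFun (h.symm.trans h') 0 : _) 0
    have e01 := congrFun (congrFun (h.symm.trans h') 0 : _) 1
    have e11 := congrFun (congrFun (h.symm.trans h') 1 : _) 1
    simp at e00 e01 e11
    have hv : (v : F) = v' := by linear_combination e00 - e11
    apply hxy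
    ext
    rw [hv] at e01
    exact mul_right_cancel₀ v'.ne_zero e01
  · -- card A1
    refine card_helper _ (fun u z => ⟨!![(u : F) + z, 0; 0, z], by rw [mem_tri_iff]; simp⟩)
      (fun u z => mem_A1star.mpr ⟨u, z, rfl⟩) ?_ ?_ q hq
    · intro A hA
      rw [mem_A1star] at hA
      obtain ⟨u, z, h⟩ := hA
      exact ⟨u, z, Subtype.ext h.symm⟩
    · intro u z u' z' h
      rw [Subtype.ext_iff] at h
      have e00 := congrFun (congrFun h 0 : _) 0
      have e11 := congrFun (congrFun h 1 : _) 1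
      simp at e00 e11
      refine ⟨Units.ext ?_, e11⟩
      linear_combination e00 - e11
  · -- card A2
    refine card_helper _ (fun u z => ⟨!![z, (u : F); 0, z], by rw [mem_tri_iff]; simp⟩)
      (fun u z => mem_A2star.mpr ⟨u, z, rfl⟩) ?_ ?_ q hq
    · intro A hA
      rw [mem_A2star] at hA
      obtain ⟨u, z, h⟩ := hA
      exact ⟨u, z, Subtype.ext h.symm⟩
    · intro u z u' z' h
      rw [Subtype.ext_iff] at h
      have e01 := congrFun (congrFun h 0 : _) 1
      have e11 := congrFun (congrFun h 1 : _) 1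
      simp at e01 e11
      exact ⟨Units.ext e01, e11⟩
  · -- card A3
    intro x
    refine card_helper _
      (fun v z => ⟨!![(v : F) + z, (x : F) * v; 0, z], by rw [mem_tri_iff]; simp⟩)
      (fun v z => mem_A3star.mpr ⟨v, z, rfl⟩) ?_ ?_ q hq
    · intro A hA
      rw [mem_A3star] at hA
      obtain ⟨v, z, h⟩ := hA
      exact ⟨v, z, Subtype.ext h.symm⟩
    · intro v z v' z' h
      rw [Subtype.ext_iff] at h
      have e00 := congrFun (congrFun h 0 : _) 0
      have e11 := congrFun (congrFun h 1 : _) 1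
      simp at e00 e11
      refine ⟨Units.ext ?_, e11⟩
      linear_combination e00 - e11
  · -- clique A1
    intro B hB' C hC'
    rw [mem_A1star] at hB' hC'
    obtain ⟨u, z, hB⟩ := hB'
    obtain ⟨u', z', hC⟩ := hC'
    ext1
    push_cast
    rw [hB, hC]
    exact tri_comm (by ring)
  · -- clique A2
    intro B hB' C hC'
    rw [mem_A2star] at hB' hC'
    obtain ⟨u, z, hB⟩ := hB'
    obtain ⟨u', z', hC⟩ := hC'
    ext1
    push_cast
    rw [hB, hC]
    exact tri_comm (by ring)
  · -- clique A3
    intro x B hB' C hC'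
    rw [mem_A3star] at hB' hC'
    obtain ⟨v, z, hB⟩ := hB'
    obtain ⟨v', z', hC⟩ := hC'
    ext1
    push_cast
    rw [hB, hC]
    exact tri_comm (by ring)
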